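/- arXiv:2102.06852 — 2 statements merged into one kernel-verified Lean document; each statement's English description precedes it below -/
import Mathlib

section
/- Let f : ℝ^N → ℝ be convex differentiable with nonempty minimizer set X_f, and suppose f is restricted strongly convex on a convex set C with constant α > 0. Then for every x ∈ C, f(x) − min f ≤ (1/α)‖∇f(x)‖₂². -/
open RealInnerProductSpace

lemma grad_ineq_aux {N : ℕ} (f : EuclideanSpace ℝ (Fin N) → ℝ)
    (hconv : ConvexOn ℝ Set.univ f) (hdiff : Differentiable ℝ f)
    (x y : EuclideanSpace ℝ (Fin N)) :
    ⟪gradient f x, y - x⟫ ≤ f y - f x := by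
  set v := y - x with hv
  have hline : HasDerivAt (fun t : ℝ => x + t • v) v 0 := by
    simpa using ((hasDerivAt_id (0:ℝ)).smul_const v).const_add x
  have hfd : HasFDerivAt f ((InnerProductSpace.toDual ℝ _) (gradient f x)) x :=
    (hasGradientAt_iff_hasFDerivAt).1 (hdiff x).hasGradientAt
  have hcomp : HasDerivAt (fun t : ℝ => f (x + t • v)) ⟪gradient f x, v⟫ 0 := by
    have hfd' : HasFDerivAt f ((InnerProductSpace.toDual ℝ _) (gradient f x))
        (x + (0:ℝ) • v) := by simpa using hfd
    have := hfd'.comp_hasDerivAt 0 hline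
    simpa [Function.comp_def] using this
  have hslope : Filter.Tendsto (slope (fun t : ℝ => f (x + t • v)) 0)
      (nhdsWithin 0 {(0:ℝ)}ᶜ) (nhds ⟪gradient f x, v⟫) :=
    hasDerivAt_iff_tendsto_slope.1 hcomp
  have hsub : Set.Ioi (0:ℝ) ⊆ {(0:ℝ)}ᶜ := fun t ht => ne_of_gt ht
  have hslope' := hslope.mono_left (nhdsWithin_mono 0 hsub)
  refine le_of_tendsto hslope' ?_
  filter_upwards [Ioo_mem_nhdsGT_of_mem (by norm_num : (0:ℝ) ∈ Set.Ico 0 1)] with t ht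
  obtain ⟨ht0, ht1⟩ := ht
  have hcvx := hconv.2 (Set.mem_univ x) (Set.mem_univ y) (by linarith : (0:ℝ) ≤ 1 - t)
    ht0.le (by ring)
  have heq : (1 - t) • x + t • y = x + t • v := by
    simp only [hv, smul_sub, sub_smul, one_smul]; module
  rw [heq] at hcvx
  simp only [smul_eq_mul] at hcvx
  rw [slope_def_field]
  rw [div_le_iff₀ (by simpa using ht0)]
  simp only [zero_smul, add_zero, sub_zero]
  nlinarith

lemma gradient_zero_of_min {N : ℕ} (f : EuclideanSpace ℝ (Fin N) → ℝ)
    (p : EuclideanSpace ℝ (Fin N)) (hp : ∀ y, f p ≤ f y) :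
    gradient f p = 0 := by
  have hmin : IsLocalMin f p := Filter.Eventually.of_forall (fun y => hp y)
  have : fderiv ℝ f p = 0 := hmin.fderiv_eq_zero
  show (InnerProductSpace.toDual ℝ _).symm (fderiv ℝ f p) = 0
  rw [this]; simp

theorem restricted_strong_convexity_bound {N : ℕ} (α : ℝ) (hα : 0 < α)
    (f : EuclideanSpace ℝ (Fin N) → ℝ)
    (hconv : ConvexOn ℝ Set.univ f)
    (hdiff : Differentiable ℝ f)
    (Xf : Set (EuclideanSpace ℝ (Fin N)))
    (hXf : Xf = {x | ∀ y, f x ≤ f y}) (hXfne : Xf.Nonempty)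
    (C : Set (EuclideanSpace ℝ (Fin N))) (hC : Convex ℝ C)
    (proj : EuclideanSpace ℝ (Fin N) → EuclideanSpace ℝ (Fin N))
    (hproj : ∀ x ∈ C, proj x ∈ Xf ∩ C ∧ ∀ w ∈ Xf ∩ C, ‖x - proj x‖ ≤ ‖x - w‖)
    (hrsc : ∀ x ∈ C,
      α * ‖proj x - x‖ ^ 2 ≤ ⟪gradient f (proj x) - gradient f x, proj x - x⟫) :
    ∀ x ∈ C, ∀ xm ∈ Xf, f x - f xm ≤ (1 / α) * ‖gradient f x‖ ^ 2 := by
  intro x hx xm hxm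
  set p := proj x with hp
  have hpXf : p ∈ Xf := ((hproj x hx).1).1
  rw [hXf] at hpXf hxm
  have hfp_eq : f p = f xm := le_antisymm (hpXf xm) (hxm p)
  have hgp : gradient f p = 0 := gradient_zero_of_min f p hpXf
  have hrsc' := hrsc x hx
  rw [hgp, zero_sub, inner_neg_left] at hrsc'
  have hinner : -⟪gradient f x, p - x⟫ = ⟪gradient f x, x - p⟫ := by
    rw [← inner_neg_right]; congr 1; abel
  rw [hinner] at hrsc'
  -- Cauchy-Schwarz
  have hCS : ⟪gradient f x, x - p⟫ ≤ ‖gradient f x‖ * ‖x - p‖ :=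
    real_inner_le_norm _ _
  have hnorm_eq : ‖p - x‖ = ‖x - p‖ := norm_sub_rev _ _
  rw [hnorm_eq] at hrsc'
  -- bound on ‖x - p‖
  have hconv_ineq : f x - f p ≤ ⟪gradient f x, x - p⟫ := by
    have := grad_ineq_aux f hconv hdiff x p
    have h2 : ⟪gradient f x, p - x⟫ = -⟪gradient f x, x - p⟫ := by
      rw [← inner_neg_right]; congr 1; abel
    linarith [grad_ineq_aux f hconv hdiff x p, h2 ▸ this]
  rcases eq_or_ne x p with h | h
  · have : f x = f xm := h ▸ hfp_eq
    rw [this]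
    simp
    positivity
  · have hpos : 0 < ‖x - p‖ := by
      rw [norm_pos_iff]; exact sub_ne_zero_of_ne h
    have hbound : ‖x - p‖ ≤ ‖gradient f x‖ / α := by
      rw [le_div_iff₀ hα, mul_comm]
      have : α * ‖x - p‖ * ‖x - p‖ ≤ ‖gradient f x‖ * ‖x - p‖ := by
        calc α * ‖x - p‖ * ‖x - p‖ = α * ‖x - p‖ ^ 2 := by ring
        _ ≤ ⟪gradient f x, x - p⟫ := hrsc'
        _ ≤ ‖gradient f x‖ * ‖x - p‖ := hCS
      exact le_of_mul_le_mul_right this hpos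
    calc f x - f xm = f x - f p := by rw [hfp_eq]
      _ ≤ ⟪gradient f x, x - p⟫ := hconv_ineq
      _ ≤ ‖gradient f x‖ * ‖x - p‖ := hCS
      _ ≤ ‖gradient f x‖ * (‖gradient f x‖ / α) := by
          exact mul_le_mul_of_nonneg_left hbound (norm_nonneg _)
      _ = (1 / α) * ‖gradient f x‖ ^ 2 := by field_simp
end

section
/- One-step descent of the regularized Kaczmarz update: let A ∈ ℝ^{1×N₂×N₃}, B ∈ ℝ^{1×K×N₃} with A ≠ 0, and let f be α_f-strongly convex on ℝ^{N₂×K×N₃}. Given Z̄ and X̄ = ∇f*(Z̄), define Z = Z̄ + t·(Aᵀ/‖A‖_F²)*(B − A*X̄) and X = ∇f*(Z). If 0 < t < 2α_f/N₃, then for every H with A*H = B, D_{f,Z}(X, H) ≤ D_{f,Z̄}(X̄, H) − (t/‖A‖_F²)(1 − tN₃/(2α_f))·‖B − A*X̄‖_F². -/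
set_option maxHeartbeats 1000000


open RealInnerProductSpace Filter Topology

/-- The tensor space ℝ^{N₂×K×N₃} as a Euclidean space. -/
abbrev T3 (N₂ K N₃ : ℕ) := EuclideanSpace ℝ (Fin N₂ × Fin K × Fin N₃)

/-- t-product `A * X` of `A ∈ ℝ^{1×N₂×N₃}` with `X ∈ ℝ^{N₂×K×N₃}`. -/
def sliceFwd {N₂ K N₃ : ℕ} [NeZero N₃] (A : Fin N₂ → Fin N₃ → ℝ)
    (X : T3 N₂ K N₃) : Fin K → Fin N₃ → ℝ :=
  fun q k => ∑ j, ∑ l, A j (k - l) * X (j, q, l)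

/-- t-product `Aᵀ * R` of the tensor transpose `Aᵀ ∈ ℝ^{N₂×1×N₃}` with
`R ∈ ℝ^{1×K×N₃}`. -/
noncomputable def sliceAdj {N₂ K N₃ : ℕ} [NeZero N₃] (A : Fin N₂ → Fin N₃ → ℝ)
    (R : Fin K → Fin N₃ → ℝ) : T3 N₂ K N₃ :=
  (WithLp.equiv 2 _).symm fun p => ∑ l, A p.1 (l - p.2.2) * R p.2.1 l

/-- Squared Frobenius norm of `A ∈ ℝ^{1×N₂×N₃}`. -/
def frobSqA {N₂ N₃ : ℕ} (A : Fin N₂ → Fin N₃ → ℝ) : ℝ :=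
  ∑ j, ∑ k, (A j k) ^ 2

/-- The convex (Fenchel) conjugate `f*(z) = sup_x ⟪z,x⟫ - f(x)`. -/
noncomputable def fconj {N₂ K N₃ : ℕ} (f : T3 N₂ K N₃ → ℝ) (z : T3 N₂ K N₃) : ℝ :=
  ⨆ x, ⟪z, x⟫ - f x

/-- Bregman distance `D_{f,Z}(∇f*(Z), H) = f(H) + f*(Z) - ⟪Z, H⟫`. -/
noncomputable def breg {N₂ K N₃ : ℕ} (f : T3 N₂ K N₃ → ℝ) (Z H : T3 N₂ K N₃) : ℝ :=
  f H + fconj f Z - ⟪Z, H⟫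

lemma inner_T3 {N₂ K N₃ : ℕ} (x y : T3 N₂ K N₃) : ⟪x, y⟫ = ∑ p, x p * y p := by
  simp [PiLp.inner_apply, RCLike.inner_apply, starRingEnd_apply]
  exact Finset.sum_congr rfl fun _ _ => mul_comm _ _

lemma sliceAdj_apply {N₂ K N₃ : ℕ} [NeZero N₃] (A : Fin N₂ → Fin N₃ → ℝ)
    (R : Fin K → Fin N₃ → ℝ) (p : Fin N₂ × Fin K × Fin N₃) :
    sliceAdj A R p = ∑ l, A p.1 (l - p.2.2) * R p.2.1 l := rfl

lemma adj_inner {N₂ K N₃ : ℕ} [NeZero N₃] (A : Fin N₂ → Fin N₃ → ℝ)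
    (R : Fin K → Fin N₃ → ℝ) (X : T3 N₂ K N₃) :
    ⟪sliceAdj A R, X⟫ = ∑ q, ∑ l, R q l * sliceFwd A X q l := by
  rw [inner_T3]
  simp only [sliceAdj_apply, sliceFwd, Fintype.sum_prod_type]
  rw [Finset.sum_comm]
  refine Finset.sum_congr rfl fun q _ => ?_
  calc ∑ j, ∑ k, (∑ l, A j (l - k) * R q l) * X (j, q, k)
      = ∑ j, ∑ k, ∑ l, A j (l - k) * R q l * X (j, q, k) := by
        simp [Finset.sum_mul]
    _ = ∑ j, ∑ l, ∑ k, A j (l - k) * R q l * X (j, q, k) :=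
        Finset.sum_congr rfl fun j _ => Finset.sum_comm
    _ = ∑ l, ∑ j, ∑ k, A j (l - k) * R q l * X (j, q, k) := Finset.sum_comm
    _ = ∑ l, R q l * ∑ j, ∑ k, A j (l - k) * X (j, q, k) := by
        refine Finset.sum_congr rfl fun l _ => ?_
        rw [Finset.mul_sum]
        refine Finset.sum_congr rfl fun j _ => ?_
        rw [Finset.mul_sum]
        exact Finset.sum_congr rfl fun k _ => by ring

lemma adj_norm_sq_le {N₂ K N₃ : ℕ} [NeZero N₃] (A : Fin N₂ → Fin N₃ → ℝ)
    (R : Fin K → Fin N₃ → ℝ) :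
    ‖sliceAdj A R‖ ^ 2 ≤ (N₃ : ℝ) * frobSqA A * (∑ q, ∑ l, (R q l) ^ 2) := by
  rw [← real_inner_self_eq_norm_sq, inner_T3]
  have step : ∀ p : Fin N₂ × Fin K × Fin N₃,
      sliceAdj A R p * sliceAdj A R p ≤ (∑ k, (A p.1 k) ^ 2) * (∑ l, (R p.2.1 l) ^ 2) := by
    intro p
    rw [sliceAdj_apply, ← sq]
    calc (∑ l, A p.1 (l - p.2.2) * R p.2.1 l) ^ 2
        ≤ (∑ l, (A p.1 (l - p.2.2)) ^ 2) * (∑ l, (R p.2.1 l) ^ 2) :=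
          Finset.sum_mul_sq_le_sq_mul_sq _ _ _
      _ = (∑ k, (A p.1 k) ^ 2) * (∑ l, (R p.2.1 l) ^ 2) := by
          congr 1
          exact Fintype.sum_equiv (Equiv.subRight p.2.2) _ _ (fun l => rfl)
  calc ∑ p, sliceAdj A R p * sliceAdj A R p
      ≤ ∑ p : Fin N₂ × Fin K × Fin N₃, (∑ k, (A p.1 k) ^ 2) * (∑ l, (R p.2.1 l) ^ 2) :=
        Finset.sum_le_sum fun p _ => step p
    _ = (N₃ : ℝ) * frobSqA A * (∑ q, ∑ l, (R q l) ^ 2) := by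
        simp only [Fintype.sum_prod_type]
        rw [frobSqA]
        simp only [← Finset.sum_mul, ← Finset.mul_sum]
        simp only [Finset.sum_const, Finset.card_univ, Fintype.card_fin, nsmul_eq_mul]
        rw [← Finset.mul_sum]
lemma conj_key {N₂ K N₃ : ℕ} (α : ℝ) (hα : 0 < α) (f : T3 N₂ K N₃ → ℝ)
    (hf : StrongConvexOn Set.univ α f) (z : T3 N₂ K N₃) :
    ∃ m : T3 N₂ K N₃, HasGradientAt (fconj f) m z ∧
      ∀ d, fconj f (z + d) ≤ fconj f z + ⟪d, m⟫ + ‖d‖ ^ 2 / (2 * α) := by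
  have fcont : Continuous f :=
    continuousOn_univ.mp
      ((hf.convexOn (by intro r; positivity)).continuousOn isOpen_univ)
  set h : T3 N₂ K N₃ → ℝ := fun x => f x - ⟪z, x⟫ with hh
  have hcont : Continuous h := fcont.sub (continuous_const.inner continuous_id)
  have hstrong : ∀ x y : T3 N₂ K N₃, ∀ a b : ℝ, 0 ≤ a → 0 ≤ b → a + b = 1 →
      h (a • x + b • y) ≤ a * h x + b * h y - a * b * (α / 2 * ‖x - y‖ ^ 2) := by
    intro x y a b ha hb hab
    have h1 := hf.2 (Set.mem_univ x) (Set.mem_univ y) ha hb hab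
    simp only [smul_eq_mul] at h1
    have h2 : ⟪z, a • x + b • y⟫ = a * ⟪z, x⟫ + b * ⟪z, y⟫ := by
      rw [inner_add_right, real_inner_smul_right, real_inner_smul_right]
    simp only [hh]
    rw [h2]; linarith
  -- lower bound on unit ball
  obtain ⟨x₀, hx₀b, hx₀'⟩ := (isCompact_closedBall (0 : T3 N₂ K N₃) 1).exists_isMinOn
    ⟨0, Metric.mem_closedBall_self zero_le_one⟩ hcont.continuousOn
  have hx₀ : ∀ y ∈ Metric.closedBall (0 : T3 N₂ K N₃) 1, h x₀ ≤ h y := fun y hy => hx₀' hy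
  set c : ℝ := h x₀ with hc
  -- coercivity
  have hcoer : Tendsto h (cocompact (T3 N₂ K N₃)) atTop := by
    have key : ∀ x : T3 N₂ K N₃, 1 ≤ ‖x‖ →
        ‖x‖ * (c - h 0) + h 0 + α / 2 * (‖x‖ ^ 2 - ‖x‖) ≤ h x := by
      intro x hx
      have hxpos : (0:ℝ) < ‖x‖ := lt_of_lt_of_le one_pos hx
      set a : ℝ := ‖x‖⁻¹ with hadef
      have ha0 : 0 < a := inv_pos.mpr hxpos
      have har : a * ‖x‖ = 1 := inv_mul_cancel₀ hxpos.ne'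
      have hb0 : 0 ≤ 1 - a := by
        have : a ≤ 1 := by
          rw [hadef]; exact inv_le_one_of_one_le₀ hx
        linarith
      have h1 := hstrong x 0 a (1 - a) ha0.le hb0 (by ring)
      have h2 : c ≤ h (a • x + (1 - a) • 0) := by
        apply hx₀
        simp [norm_smul, abs_of_pos ha0, har]
      rw [smul_zero, add_zero] at h1 h2
      rw [sub_zero] at h1
      have h3 : c ≤ a * h x + (1 - a) * h 0 - a * (1 - a) * (α / 2 * ‖x‖ ^ 2) :=
        h2.trans h1
      rw [hadef] at h3
      have e : ‖x‖ * (‖x‖⁻¹ * h x + (1 - ‖x‖⁻¹) * h 0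
          - ‖x‖⁻¹ * (1 - ‖x‖⁻¹) * (α / 2 * ‖x‖ ^ 2))
          = h x + (‖x‖ - 1) * h 0 - α / 2 * (‖x‖ ^ 2 - ‖x‖) := by
        field_simp
      have h5 : ‖x‖ * c ≤ h x + (‖x‖ - 1) * h 0 - α / 2 * (‖x‖ ^ 2 - ‖x‖) := by
        have := mul_le_mul_of_nonneg_left h3 hxpos.le
        rwa [e] at this
      linarith
    have hq : Tendsto (fun r : ℝ => r * (c - h 0) + h 0 + α / 2 * (r ^ 2 - r)) atTop atTop := by
      have : (fun r : ℝ => r * (c - h 0) + h 0 + α / 2 * (r ^ 2 - r))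
          = fun r : ℝ => r * ((c - h 0) - α / 2 + α / 2 * r) + h 0 := by
        funext r; ring
      rw [this]
      apply tendsto_atTop_add_const_right
      exact Tendsto.atTop_mul_atTop₀ tendsto_id
        (tendsto_atTop_add_const_left _ _ (tendsto_id.const_mul_atTop (by positivity)))
    apply tendsto_atTop_mono' _ _ (hq.comp tendsto_norm_cocompact_atTop)
    filter_upwards [tendsto_norm_cocompact_atTop.eventually_ge_atTop 1] with x hx
    exact key x hx
  -- global minimizer of h
  obtain ⟨m, hm⟩ := hcont.exists_forall_le hcoer
  -- quadratic growth
  have hquad : ∀ x, h m + α / 2 * ‖x - m‖ ^ 2 ≤ h x := by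
    intro x
    have step : ∀ a : ℝ, a ∈ Set.Ioo (0:ℝ) 1 →
        h m + (1 - a) * (α / 2 * ‖x - m‖ ^ 2) ≤ h x := by
      rintro a ⟨ha0, ha1⟩
      have h1 := hstrong x m a (1 - a) ha0.le (by linarith) (by ring)
      have h2 := hm (a • x + (1 - a) • m)
      have h3 : a * (h m + (1 - a) * (α / 2 * ‖x - m‖ ^ 2)) ≤ a * h x := by
        nlinarith [h2.trans h1]
      exact le_of_mul_le_mul_left h3 ha0
    have hlim : Tendsto (fun a : ℝ => h m + (1 - a) * (α / 2 * ‖x - m‖ ^ 2))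
        (𝓝[>] (0:ℝ)) (𝓝 (h m + α / 2 * ‖x - m‖ ^ 2)) := by
      have : Tendsto (fun a : ℝ => h m + (1 - a) * (α / 2 * ‖x - m‖ ^ 2))
          (𝓝 (0:ℝ)) (𝓝 (h m + (1 - 0) * (α / 2 * ‖x - m‖ ^ 2))) := by
        apply Continuous.tendsto
        continuity
      simpa using this.mono_left nhdsWithin_le_nhds
    refine le_of_tendsto hlim ?_
    filter_upwards [Ioo_mem_nhdsGT_of_mem (Set.mem_Ico.mpr ⟨le_refl (0:ℝ), one_pos⟩)] with a ha
    exact step a ha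
  -- term bound
  have hterm : ∀ w x : T3 N₂ K N₃,
      ⟪w, x⟫ - f x ≤ (⟪z, m⟫ - f m) + ⟪w - z, m⟫ + ‖w - z‖ ^ 2 / (2 * α) := by
    intro w x
    have h1 := hquad x
    have h2 : ⟪w - z, x - m⟫ ≤ ‖w - z‖ * ‖x - m‖ := real_inner_le_norm _ _
    have h3 : ‖w - z‖ * ‖x - m‖ - α / 2 * ‖x - m‖ ^ 2 ≤ ‖w - z‖ ^ 2 / (2 * α) := by
      rw [le_div_iff₀ (by positivity : (0:ℝ) < 2 * α)]
      nlinarith [sq_nonneg (α * ‖x - m‖ - ‖w - z‖)]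
    have e1 : ⟪w, x⟫ = ⟪z, x⟫ + ⟪w - z, x⟫ := by rw [← inner_add_left]; congr 1; abel
    have e2 : ⟪w - z, x⟫ = ⟪w - z, m⟫ + ⟪w - z, x - m⟫ := by
      rw [← inner_add_right]; congr 1; abel
    have e3 : ⟪z, x⟫ = ⟪z, m⟫ + ⟪z, x - m⟫ := by rw [← inner_add_right]; congr 1; abel
    simp only [hh] at h1
    have h4 : f x ≥ f m + ⟪z, x - m⟫ + α / 2 * ‖x - m‖ ^ 2 := by
      have : ⟪z, x - m⟫ = ⟪z, x⟫ - ⟪z, m⟫ := inner_sub_right _ _ _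
      linarith [h1, this.ge, this.le]
    rw [e1, e2, e3]
    linarith
  have hbdd : ∀ w : T3 N₂ K N₃, BddAbove (Set.range fun x => ⟪w, x⟫ - f x) := by
    intro w
    exact ⟨(⟪z, m⟫ - f m) + ⟪w - z, m⟫ + ‖w - z‖ ^ 2 / (2 * α),
      Set.forall_mem_range.mpr fun x => hterm w x⟩
  have hval : fconj f z = ⟪z, m⟫ - f m := by
    apply le_antisymm
    · apply ciSup_le
      intro x
      have := hquad x
      simp only [hh] at this
      nlinarith [norm_nonneg (x - m), sq_nonneg ‖x - m‖, this]
    · exact le_ciSup (hbdd z) m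
  have hupper : ∀ d, fconj f (z + d) ≤ fconj f z + ⟪d, m⟫ + ‖d‖ ^ 2 / (2 * α) := by
    intro d
    rw [hval]
    apply ciSup_le
    intro x
    have := hterm (z + d) x
    simpa [add_sub_cancel_left] using this
  have hlower : ∀ d, fconj f z + ⟪d, m⟫ ≤ fconj f (z + d) := by
    intro d
    rw [hval]
    have h1 : ⟪z + d, m⟫ - f m ≤ fconj f (z + d) := le_ciSup (hbdd (z + d)) m
    rw [inner_add_left] at h1
    linarith
  refine ⟨m, ?_, hupper⟩
  rw [hasGradientAt_iff_hasFDerivAt, hasFDerivAt_iff_isLittleO_nhds_zero]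
  have hbig : (fun d => fconj f (z + d) - fconj f z - (InnerProductSpace.toDual ℝ _ m) d)
      =O[𝓝 0] fun d : T3 N₂ K N₃ => ‖d‖ ^ 2 := by
    apply Asymptotics.IsBigO.of_bound (1 / (2 * α))
    filter_upwards with d
    have h1 := hupper d
    have h2 := hlower d
    have : (InnerProductSpace.toDual ℝ _ m) d = ⟪m, d⟫ := rfl
    rw [this, show (⟪m, d⟫ : ℝ) = ⟪d, m⟫ from real_inner_comm d m]
    rw [Real.norm_eq_abs, abs_le]
    have hp : (0:ℝ) ≤ 1 / (2 * α) * ‖d‖ ^ 2 := by positivity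
    have he : ‖d‖ ^ 2 / (2 * α) = 1 / (2 * α) * ‖d‖ ^ 2 := by ring
    constructor
    · rw [Real.norm_eq_abs, abs_of_nonneg (sq_nonneg _)]
      linarith
    · rw [Real.norm_eq_abs, abs_of_nonneg (sq_nonneg _)]
      linarith
  refine hbig.trans_isLittleO ?_
  rw [Asymptotics.isLittleO_iff]
  intro ε hε
  have : Tendsto (fun d : T3 N₂ K N₃ => ‖d‖) (𝓝 0) (𝓝 0) := by
    simpa using tendsto_norm_zero
  filter_upwards [this.eventually (eventually_le_nhds hε)] with d hd
  rw [Real.norm_eq_abs, abs_of_nonneg (sq_nonneg _), sq]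
  exact mul_le_mul_of_nonneg_right hd (norm_nonneg d)

lemma frobSq_pos {N₂ N₃ : ℕ} {A : Fin N₂ → Fin N₃ → ℝ} (hA : A ≠ 0) : 0 < frobSqA A := by
  obtain ⟨j, hj⟩ := Function.ne_iff.mp hA
  obtain ⟨k, hk⟩ := Function.ne_iff.mp hj
  refine Finset.sum_pos' (fun j _ => Finset.sum_nonneg fun k _ => sq_nonneg _)
    ⟨j, Finset.mem_univ j, ?_⟩
  refine Finset.sum_pos' (fun k _ => sq_nonneg _) ⟨k, Finset.mem_univ k, ?_⟩
  have hk' : A j k ≠ 0 := by simpa using hk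
  exact (sq_abs (A j k)) ▸ pow_pos (abs_pos.mpr hk') 2

theorem kaczmarz_tensor_one_step_descent {N₂ K N₃ : ℕ} [NeZero N₃]
    (α t : ℝ) (hα : 0 < α) (f : T3 N₂ K N₃ → ℝ)
    (hf : StrongConvexOn Set.univ α f)
    (A : Fin N₂ → Fin N₃ → ℝ) (hA : A ≠ 0)
    (B : Fin K → Fin N₃ → ℝ)
    (ht : 0 < t) (ht2 : t < 2 * α / (N₃ : ℝ))
    (Zb Xb Z X : T3 N₂ K N₃)
    (hXb : Xb = gradient (fconj f) Zb)
    (hZ : Z = Zb + (t / frobSqA A) •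
      sliceAdj A (fun q k => B q k - sliceFwd A Xb q k))
    (hX : X = gradient (fconj f) Z) :
    ∀ H : T3 N₂ K N₃, sliceFwd A H = B →
      breg f Z H ≤ breg f Zb H - (t / frobSqA A) * (1 - t * (N₃ : ℝ) / (2 * α)) *
        (∑ q, ∑ k, (B q k - sliceFwd A Xb q k) ^ 2) := by

  intro H hH
  obtain ⟨m, hgrad, hsmooth⟩ := conj_key α hα f hf Zb
  have hXbm : m = Xb := by rw [hXb, hgrad.gradient]
  rw [hXbm] at hsmooth
  have hc : 0 < frobSqA A := frobSq_pos hA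
  set Rf : Fin K → Fin N₃ → ℝ := fun q k => B q k - sliceFwd A Xb q k with hRf
  set d : T3 N₂ K N₃ := (t / frobSqA A) • sliceAdj A Rf with hd
  have hZd : Z = Zb + d := hZ
  have hSS : (∑ q, ∑ k, (B q k - sliceFwd A Xb q k) ^ 2) = ∑ q, ∑ k, Rf q k ^ 2 := rfl
  rw [hSS]
  have hSnn : 0 ≤ ∑ q, ∑ k, Rf q k ^ 2 :=
    Finset.sum_nonneg fun q _ => Finset.sum_nonneg fun k _ => sq_nonneg _
  have h1 : fconj f Z ≤ fconj f Zb + ⟪d, Xb⟫ + ‖d‖ ^ 2 / (2 * α) := by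
    rw [hZd]; exact hsmooth d
  have hinner : ∀ Y : T3 N₂ K N₃,
      ⟪d, Y⟫ = (t / frobSqA A) * ∑ q, ∑ l, Rf q l * sliceFwd A Y q l := by
    intro Y
    rw [hd, real_inner_smul_left, adj_inner]
  have hXbH : ⟪d, Xb⟫ = ⟪d, H⟫ - (t / frobSqA A) * ∑ q, ∑ k, Rf q k ^ 2 := by
    rw [hinner Xb, hinner H]
    have e : (∑ q, ∑ l, Rf q l * sliceFwd A Xb q l)
        = (∑ q, ∑ l, Rf q l * sliceFwd A H q l) - ∑ q, ∑ k, Rf q k ^ 2 := by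
      rw [hH, ← Finset.sum_sub_distrib]
      refine Finset.sum_congr rfl fun q _ => ?_
      rw [← Finset.sum_sub_distrib]
      refine Finset.sum_congr rfl fun l _ => ?_
      simp only [hRf]
      ring
    rw [e]
    ring
  have hd2 : ‖d‖ ^ 2 ≤ (t / frobSqA A) ^ 2 *
      ((N₃ : ℝ) * frobSqA A * ∑ q, ∑ k, Rf q k ^ 2) := by
    rw [hd, norm_smul, mul_pow, Real.norm_eq_abs, sq_abs]
    exact mul_le_mul_of_nonneg_left (adj_norm_sq_le A Rf) (by positivity)
  have key : (t / frobSqA A) ^ 2 * ((N₃ : ℝ) * frobSqA A * ∑ q, ∑ k, Rf q k ^ 2) / (2 * α)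
      = (t / frobSqA A) * (t * (N₃ : ℝ) / (2 * α)) * ∑ q, ∑ k, Rf q k ^ 2 := by
    field_simp
  have h2 : ‖d‖ ^ 2 / (2 * α) ≤
      (t / frobSqA A) * (t * (N₃ : ℝ) / (2 * α)) * ∑ q, ∑ k, Rf q k ^ 2 := by
    rw [← key]
    gcongr
  have hZH : ⟪Z, H⟫ = ⟪Zb, H⟫ + ⟪d, H⟫ := by rw [hZd, inner_add_left]
  have expand : (t / frobSqA A) * (1 - t * (N₃ : ℝ) / (2 * α)) * ∑ q, ∑ k, Rf q k ^ 2
      = (t / frobSqA A) * (∑ q, ∑ k, Rf q k ^ 2)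
        - (t / frobSqA A) * (t * (N₃ : ℝ) / (2 * α)) * ∑ q, ∑ k, Rf q k ^ 2 := by ring
  simp only [breg]
  rw [hZH]
  linarith [h1, hXbH, h2, expand]
end
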